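/- Let k ≥ 2 and suppose the function κ ↦ (σ_k(κ)/σ_1(κ))^{1/(k−1)} is concave on the cone Γ_k^+. Then for any κ ∈ Γ_k^+ and any vector ξ = (ξ_1,…,ξ_n) ∈ ℝ^n (representing derivatives ∇_i h_{pp} in a diagonal frame), one has Σ_{p,q} (∂²σ_k/∂κ_p∂κ_q)(κ) ξ_p ξ_q ≤ −σ_k(κ) · (S/σ_k − T/σ_1) · ( ((2−k)/(k−1)) S/σ_k − (k/(k−1)) T/σ_1 ), where S = Σ_p (∂σ_k/∂κ_p) ξ_p and T = Σ_p ξ_p. -/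

import Mathlib

open Finset

noncomputable def esym {n : ℕ} (m : ℕ) (κ : Fin n → ℝ) : ℝ :=
  ∑ s ∈ Finset.powersetCard m (Finset.univ : Finset (Fin n)), ∏ i ∈ s, κ i

noncomputable def esymRem {n : ℕ} (m : ℕ) (κ : Fin n → ℝ) (i : Fin n) : ℝ :=
  ∑ s ∈ Finset.powersetCard m ((Finset.univ : Finset (Fin n)).erase i), ∏ j ∈ s, κ j

/-- The `m`-th elementary symmetric polynomial with the entries `κ p` and `κ q` removed. -/
noncomputable def esymRem2 {n : ℕ} (m : ℕ) (κ : Fin n → ℝ) (p q : Fin n) : ℝ :=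
  ∑ s ∈ Finset.powersetCard m (((Finset.univ : Finset (Fin n)).erase p).erase q),
    ∏ j ∈ s, κ j

lemma sum_filter_insert {α M : Type*} [DecidableEq α] [AddCommMonoid M] (m : ℕ) (A : Finset α)
    (p : α) (hp : p ∈ A) (f : Finset α → M) :
    ∑ s ∈ (A.powersetCard (m+1)).filter (fun s => p ∈ s), f s
      = ∑ u ∈ (A.erase p).powersetCard m, f (insert p u) := by
  refine Finset.sum_nbij' (fun s => s.erase p) (fun u => insert p u) ?_ ?_ ?_ ?_ ?_
  · intro s hs
    simp only [mem_filter, mem_powersetCard] at hs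
    simp only [mem_powersetCard]
    refine ⟨erase_subset_erase _ hs.1.1, ?_⟩
    rw [card_erase_of_mem hs.2, hs.1.2]
    omega
  · intro u hu
    simp only [mem_powersetCard] at hu
    have hpu : p ∉ u := fun h => (mem_erase.mp (hu.1 h)).1 rfl
    simp only [mem_filter, mem_powersetCard]
    refine ⟨⟨?_, ?_⟩, mem_insert_self _ _⟩
    · intro x hx
      rcases mem_insert.mp hx with rfl | hx
      · exact hp
      · exact (erase_subset _ _) (hu.1 hx)
    · rw [card_insert_of_notMem hpu, hu.2]
  · intro s hs
    simp only [mem_filter] at hs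
    exact insert_erase hs.2
  · intro u hu
    simp only [mem_powersetCard] at hu
    have hpu : p ∉ u := fun h => (mem_erase.mp (hu.1 h)).1 rfl
    exact erase_insert hpu
  · intro s hs
    simp only [mem_filter] at hs
    rw [insert_erase hs.2]

lemma sum_pcard_succ {α M : Type*} [DecidableEq α] [AddCommMonoid M] (m : ℕ) (A : Finset α)
    (g : α → Finset α → M) :
    ∑ s ∈ A.powersetCard (m+1), ∑ p ∈ s, g p s
      = ∑ p ∈ A, ∑ u ∈ (A.erase p).powersetCard m, g p (insert p u) := by
  have h1 : ∀ s ∈ A.powersetCard (m+1), ∑ p ∈ s, g p s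
      = ∑ p ∈ A, if p ∈ s then g p s else 0 := by
    intro s hs
    rw [Finset.sum_ite_mem A s (fun p => g p s)]
    congr 1
    exact (Finset.inter_eq_right.mpr (mem_powersetCard.mp hs).1).symm
  rw [Finset.sum_congr rfl h1, Finset.sum_comm]
  refine Finset.sum_congr rfl fun p hp => ?_
  rw [← Finset.sum_filter]
  exact sum_filter_insert m A p hp _

lemma pcard_one_sum {α M : Type*} [DecidableEq α] [AddCommMonoid M] (s : Finset α)
    (f : Finset α → M) : ∑ u ∈ s.powersetCard 1, f u = ∑ p ∈ s, f {p} := by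
  rw [Finset.powersetCard_one, Finset.sum_map]
  rfl

lemma esym_one {n : ℕ} (κ : Fin n → ℝ) : esym 1 κ = ∑ i, κ i := by
  unfold esym
  rw [pcard_one_sum]
  simp

lemma esym_line {n : ℕ} (k : ℕ) (κ ξ : Fin n → ℝ) (t : ℝ) :
    esym k (fun i => κ i + t * ξ i)
      = ∑ s ∈ powersetCard k (univ : Finset (Fin n)), ∑ u ∈ s.powerset,
          t ^ u.card * ((∏ i ∈ u, ξ i) * ∏ i ∈ s \ u, κ i) := by
  unfold esym
  refine Finset.sum_congr rfl fun s hs => ?_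
  have : ∀ i ∈ s, κ i + t * ξ i = t * ξ i + κ i := fun i _ => add_comm _ _
  rw [Finset.prod_congr rfl this, Finset.prod_add]
  refine Finset.sum_congr rfl fun u hu => ?_
  rw [Finset.prod_mul_distrib, Finset.prod_const]
  ring

lemma E1_eval {n : ℕ} (m : ℕ) (κ ξ : Fin n → ℝ) :
    ∑ s ∈ powersetCard (m+1) (univ : Finset (Fin n)), ∑ u ∈ s.powerset,
        ((u.card : ℝ) * (0:ℝ) ^ (u.card - 1)) * ((∏ i ∈ u, ξ i) * ∏ i ∈ s \ u, κ i)
      = ∑ p, esymRem m κ p * ξ p := by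
  have step1 : ∀ s : Finset (Fin n), ∀ u ∈ s.powerset,
      ((u.card : ℝ) * (0:ℝ) ^ (u.card - 1)) * ((∏ i ∈ u, ξ i) * ∏ i ∈ s \ u, κ i)
        = if u.card = 1 then (∏ i ∈ u, ξ i) * ∏ i ∈ s \ u, κ i else 0 := by
    intro s u _
    rcases hc : u.card with _ | _ | j
    · simp
    · simp
    · simp [pow_succ]
  calc ∑ s ∈ powersetCard (m+1) (univ : Finset (Fin n)), ∑ u ∈ s.powerset,
        ((u.card : ℝ) * (0:ℝ) ^ (u.card - 1)) * ((∏ i ∈ u, ξ i) * ∏ i ∈ s \ u, κ i)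
      = ∑ s ∈ powersetCard (m+1) (univ : Finset (Fin n)), ∑ p ∈ s,
          ξ p * ∏ i ∈ s.erase p, κ i := by
        refine Finset.sum_congr rfl fun s hs => ?_
        rw [Finset.sum_congr rfl (step1 s), Finset.sum_ite, Finset.sum_const_zero, add_zero,
          ← Finset.powersetCard_eq_filter, pcard_one_sum]
        refine Finset.sum_congr rfl fun p hp => ?_
        rw [Finset.prod_singleton, Finset.sdiff_singleton_eq_erase]
    _ = ∑ p, ∑ u ∈ powersetCard m ((univ : Finset (Fin n)).erase p),
          ξ p * ∏ i ∈ (insert p u).erase p, κ i := sum_pcard_succ m univ _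
    _ = ∑ p, esymRem m κ p * ξ p := by
        refine Finset.sum_congr rfl fun p _ => ?_
        unfold esymRem
        rw [Finset.sum_mul]
        refine Finset.sum_congr rfl fun u hu => ?_
        have hpu : p ∉ u := fun h => (mem_erase.mp ((mem_powersetCard.mp hu).1 h)).1 rfl
        rw [Finset.erase_insert hpu]
        ring

lemma sdiff_pair {n : ℕ} (p q : Fin n) (v : Finset (Fin n)) (hpv : p ∉ v) (hqv : q ∉ v) :
    (insert p (insert q v)) \ {p, q} = v := by
  ext x
  simp only [mem_sdiff, mem_insert, mem_singleton]
  constructor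
  · rintro ⟨h1 | h1 | h1, h2⟩ <;> tauto
  · intro hx
    refine ⟨Or.inr (Or.inr hx), ?_⟩
    rintro (rfl | rfl) <;> tauto

lemma E2_eval {n : ℕ} (m : ℕ) (κ ξ : Fin n → ℝ) :
    ∑ s ∈ powersetCard (m+2) (univ : Finset (Fin n)), ∑ u ∈ s.powerset,
        ((u.card : ℝ) * ((u.card - 1 : ℕ) * (0:ℝ) ^ (u.card - 1 - 1)))
          * ((∏ i ∈ u, ξ i) * ∏ i ∈ s \ u, κ i)
      = ∑ p, ∑ q, (if p = q then 0 else esymRem2 m κ p q) * ξ p * ξ q := by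
  have step1 : ∀ s : Finset (Fin n), ∀ u ∈ s.powerset,
      ((u.card : ℝ) * ((u.card - 1 : ℕ) * (0:ℝ) ^ (u.card - 1 - 1)))
          * ((∏ i ∈ u, ξ i) * ∏ i ∈ s \ u, κ i)
        = if u.card = 2 then ((2:ℝ)) * ((∏ i ∈ u, ξ i) * ∏ i ∈ s \ u, κ i) else 0 := by
    intro s u _
    rcases hc : u.card with _ | _ | _ | j
    · simp
    · simp
    · norm_num
    · simp [pow_succ]
  calc ∑ s ∈ powersetCard (m+2) (univ : Finset (Fin n)), ∑ u ∈ s.powerset,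
        ((u.card : ℝ) * ((u.card - 1 : ℕ) * (0:ℝ) ^ (u.card - 1 - 1)))
          * ((∏ i ∈ u, ξ i) * ∏ i ∈ s \ u, κ i)
      = ∑ s ∈ powersetCard (m+2) (univ : Finset (Fin n)), ∑ u ∈ s.powersetCard 2,
          ∑ p ∈ u, ((∏ i ∈ u, ξ i) * ∏ i ∈ s \ u, κ i) := by
        refine Finset.sum_congr rfl fun s hs => ?_
        rw [Finset.sum_congr rfl (step1 s), Finset.sum_ite, Finset.sum_const_zero, add_zero,
          ← Finset.powersetCard_eq_filter]
        refine Finset.sum_congr rfl fun u hu => ?_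
        have hc : u.card = 2 := (mem_powersetCard.mp hu).2
        rw [Finset.sum_const, hc]
        simp [two_mul]
    _ = ∑ s ∈ powersetCard (m+2) (univ : Finset (Fin n)), ∑ p ∈ s,
          ∑ q ∈ s.erase p, ((∏ i ∈ ({p, q} : Finset (Fin n)), ξ i) * ∏ i ∈ s \ {p, q}, κ i) := by
        refine Finset.sum_congr rfl fun s hs => ?_
        rw [show (2:ℕ) = 1 + 1 from rfl,
          sum_pcard_succ 1 s (fun _ u => ((∏ i ∈ u, ξ i) * ∏ i ∈ s \ u, κ i))]
        refine Finset.sum_congr rfl fun p hp => ?_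
        rw [pcard_one_sum]
    _ = ∑ p, ∑ q, (if p = q then 0 else esymRem2 m κ p q) * ξ p * ξ q := by
        rw [sum_pcard_succ (m+1) univ
          (fun p s => ∑ q ∈ s.erase p, ((∏ i ∈ ({p, q} : Finset (Fin n)), ξ i)
            * ∏ i ∈ s \ {p, q}, κ i))]
        refine Finset.sum_congr rfl fun p _ => ?_
        calc ∑ u ∈ powersetCard (m+1) ((univ : Finset (Fin n)).erase p),
              ∑ q ∈ (insert p u).erase p, ((∏ i ∈ ({p, q} : Finset (Fin n)), ξ i)
                * ∏ i ∈ (insert p u) \ {p, q}, κ i)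
            = ∑ u ∈ powersetCard (m+1) ((univ : Finset (Fin n)).erase p),
              ∑ q ∈ u, ((∏ i ∈ ({p, q} : Finset (Fin n)), ξ i)
                * ∏ i ∈ (insert p u) \ {p, q}, κ i) := by
              refine Finset.sum_congr rfl fun u hu => ?_
              have hpu : p ∉ u := fun h => (mem_erase.mp ((mem_powersetCard.mp hu).1 h)).1 rfl
              rw [Finset.erase_insert hpu]
          _ = ∑ q ∈ ((univ : Finset (Fin n)).erase p),
              ∑ v ∈ powersetCard m (((univ : Finset (Fin n)).erase p).erase q),
                ((∏ i ∈ ({p, q} : Finset (Fin n)), ξ i)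
                  * ∏ i ∈ (insert p (insert q v)) \ {p, q}, κ i) :=
              sum_pcard_succ m _ _
          _ = ∑ q ∈ ((univ : Finset (Fin n)).erase p), esymRem2 m κ p q * ξ p * ξ q := by
              refine Finset.sum_congr rfl fun q hq => ?_
              have hqp : q ≠ p := (mem_erase.mp hq).1
              unfold esymRem2
              rw [Finset.sum_mul, Finset.sum_mul]
              refine Finset.sum_congr rfl fun v hv => ?_
              have hv' := (mem_powersetCard.mp hv).1
              have hqv : q ∉ v := fun h => (mem_erase.mp (hv' h)).1 rfl
              have hpv : p ∉ v := fun h => (mem_erase.mp (mem_of_mem_erase (hv' h))).1 rfl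
              rw [sdiff_pair p q v hpv hqv, Finset.prod_pair (Ne.symm hqp)]
              ring
          _ = ∑ q, (if p = q then 0 else esymRem2 m κ p q) * ξ p * ξ q := by
              rw [← Finset.add_sum_erase _ _ (mem_univ p), if_pos rfl, zero_mul, zero_mul,
                zero_add]
              refine Finset.sum_congr rfl fun q hq => ?_
              rw [if_neg (Ne.symm (mem_erase.mp hq).1)]

lemma deriv_nonpos_of_antitoneOn {f : ℝ → ℝ} {ε c : ℝ} (hε : 0 < ε)
    (ha : AntitoneOn f (Set.Ioo (-ε) ε)) (hd : HasDerivAt f c 0) : c ≤ 0 := by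
  have ht := hasDerivAt_iff_tendsto_slope.mp hd
  have ht' : Filter.Tendsto (slope f 0) (nhdsWithin 0 (Set.Ioi 0)) (nhds c) :=
    ht.mono_left (nhdsWithin_mono _ (fun x hx => ne_of_gt hx))
  refine le_of_tendsto ht' ?_
  filter_upwards [Ioo_mem_nhdsGT_of_mem (Set.mem_Ico.mpr ⟨le_rfl, hε⟩)] with t htIoo
  have h1 : f t ≤ f 0 :=
    ha ⟨neg_lt_zero.mpr hε, hε⟩ ⟨by linarith [htIoo.1], htIoo.2⟩ (le_of_lt htIoo.1)
  rw [slope_def_field]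
  have : (f t - f 0) / (t - 0) ≤ 0 :=
    div_nonpos_of_nonpos_of_nonneg (by linarith) (by linarith [htIoo.1])
  simpa [div_eq_inv_mul] using this

lemma continuous_esym {n m : ℕ} : Continuous fun κ' : Fin n → ℝ => esym m κ' := by
  unfold esym
  refine continuous_finset_sum _ fun s _ => continuous_finset_prod _ fun i _ => continuous_apply i

lemma isOpen_gamma {n k : ℕ} :
    IsOpen {κ' : Fin n → ℝ | ∀ j, 1 ≤ j → j ≤ k → 0 < esym j κ'} := by
  have : {κ' : Fin n → ℝ | ∀ j, 1 ≤ j → j ≤ k → 0 < esym j κ'}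
      = ⋂ j ∈ Finset.Icc 1 k, {κ' : Fin n → ℝ | 0 < esym j κ'} := by
    ext κ'
    simp [Finset.mem_Icc]
  rw [this]
  exact isOpen_biInter_finset fun j _ => isOpen_lt continuous_const continuous_esym

noncomputable def Efun {n : ℕ} (k : ℕ) (κ ξ : Fin n → ℝ) (t : ℝ) : ℝ :=
  ∑ s ∈ powersetCard k (univ : Finset (Fin n)), ∑ u ∈ s.powerset,
    t ^ u.card * ((∏ i ∈ u, ξ i) * ∏ i ∈ s \ u, κ i)

noncomputable def E1fun {n : ℕ} (k : ℕ) (κ ξ : Fin n → ℝ) (t : ℝ) : ℝ :=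
  ∑ s ∈ powersetCard k (univ : Finset (Fin n)), ∑ u ∈ s.powerset,
    ((u.card : ℝ) * t ^ (u.card - 1)) * ((∏ i ∈ u, ξ i) * ∏ i ∈ s \ u, κ i)

noncomputable def E2fun {n : ℕ} (k : ℕ) (κ ξ : Fin n → ℝ) (t : ℝ) : ℝ :=
  ∑ s ∈ powersetCard k (univ : Finset (Fin n)), ∑ u ∈ s.powerset,
    ((u.card : ℝ) * ((u.card - 1 : ℕ) * t ^ (u.card - 1 - 1)))
      * ((∏ i ∈ u, ξ i) * ∏ i ∈ s \ u, κ i)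

lemma hasDerivAt_Efun {n : ℕ} (k : ℕ) (κ ξ : Fin n → ℝ) (t : ℝ) :
    HasDerivAt (Efun k κ ξ) (E1fun k κ ξ t) t := by
  unfold Efun E1fun
  refine HasDerivAt.fun_sum fun s _ => HasDerivAt.fun_sum fun u _ => ?_
  exact (hasDerivAt_pow u.card t).mul_const _

lemma hasDerivAt_E1fun {n : ℕ} (k : ℕ) (κ ξ : Fin n → ℝ) (t : ℝ) :
    HasDerivAt (E1fun k κ ξ) (E2fun k κ ξ t) t := by
  unfold E1fun E2fun
  refine HasDerivAt.fun_sum fun s _ => HasDerivAt.fun_sum fun u _ => ?_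
  exact ((hasDerivAt_pow (u.card - 1) t).const_mul (u.card : ℝ)).mul_const _

lemma Efun_line {n : ℕ} (k : ℕ) (κ ξ : Fin n → ℝ) (t : ℝ) :
    esym k (fun i => κ i + t * ξ i) = Efun k κ ξ t := esym_line k κ ξ t

lemma Efun_zero {n : ℕ} (k : ℕ) (κ ξ : Fin n → ℝ) : Efun k κ ξ 0 = esym k κ := by
  rw [← Efun_line]
  congr 1
  funext i
  ring

lemma E1fun_zero {n : ℕ} (m : ℕ) (κ ξ : Fin n → ℝ) :
    E1fun (m+1) κ ξ 0 = ∑ p, esymRem m κ p * ξ p := E1_eval m κ ξ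

lemma E2fun_zero {n : ℕ} (m : ℕ) (κ ξ : Fin n → ℝ) :
    E2fun (m+2) κ ξ 0 = ∑ p, ∑ q, (if p = q then 0 else esymRem2 m κ p q) * ξ p * ξ q :=
  E2_eval m κ ξ

lemma esym_one_line {n : ℕ} (κ ξ : Fin n → ℝ) (t : ℝ) :
    esym 1 (fun i => κ i + t * ξ i) = esym 1 κ + t * ∑ i, ξ i := by
  rw [esym_one, esym_one, Finset.sum_add_distrib, Finset.mul_sum]
set_option maxHeartbeats 1000000 in
/-- Lemma 4.4: assuming concavity of (σ_k/σ_1)^{1/(k−1)} on Γ_k^+, the Hessian of σ_k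
    (∂²σ_k/∂κ_p∂κ_q = σ_{k−2}(κ|pq) for p ≠ q, 0 for p = q) satisfies the stated bound. -/
theorem stmt_10 {n : ℕ} (k : ℕ) (hk : 2 ≤ k) (hkn : k ≤ n)
    (hconc : ConcaveOn ℝ {κ' : Fin n → ℝ | ∀ j, 1 ≤ j → j ≤ k → 0 < esym j κ'}
      (fun κ' => (esym k κ' / esym 1 κ') ^ ((1 : ℝ) / ((k : ℝ) - 1))))
    (κ : Fin n → ℝ) (hΓ : ∀ j, 1 ≤ j → j ≤ k → 0 < esym j κ) (ξ : Fin n → ℝ) :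
    ∑ p, ∑ q, (if p = q then 0 else esymRem2 (k - 2) κ p q) * ξ p * ξ q
      ≤ - esym k κ
          * ((∑ p, esymRem (k - 1) κ p * ξ p) / esym k κ - (∑ p, ξ p) / esym 1 κ)
          * (((2 - (k : ℝ)) / ((k : ℝ) - 1)) * (∑ p, esymRem (k - 1) κ p * ξ p) / esym k κ
              - ((k : ℝ) / ((k : ℝ) - 1)) * (∑ p, ξ p) / esym 1 κ) := by
  obtain ⟨m, rfl⟩ : ∃ m, k = m + 2 := ⟨k - 2, by omega⟩
  simp only [show m + 2 - 1 = m + 1 from rfl, show m + 2 - 2 = m from rfl] at *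
  set σ1 := esym 1 κ with hσ1def
  set σk := esym (m+2) κ with hσkdef
  set S := ∑ p, esymRem (m+1) κ p * ξ p with hSdef
  set T := ∑ p, ξ p with hTdef
  set Q := ∑ p, ∑ q, (if p = q then 0 else esymRem2 m κ p q) * ξ p * ξ q with hQdef
  set α := (1 : ℝ) / ((↑(m+2) : ℝ) - 1) with hαdef
  have hσ1pos : 0 < σ1 := hΓ 1 le_rfl (by omega)
  have hσkpos : 0 < σk := hΓ (m+2) (by omega) le_rfl
  have hcast : ((↑(m+2) : ℝ)) - 1 = (m : ℝ) + 1 := by push_cast; ring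
  have hαpos : 0 < α := by rw [hαdef, hcast]; positivity
  -- the line and its basic functions
  set E := Efun (m+2) κ ξ with hEdef
  set E₁ := E1fun (m+2) κ ξ with hE₁def
  set E₂ := E2fun (m+2) κ ξ with hE₂def
  set L : ℝ → ℝ := fun t => σ1 + t * T with hLdef
  have hE : ∀ t, HasDerivAt E (E₁ t) t := hasDerivAt_Efun (m+2) κ ξ
  have hE₁ : ∀ t, HasDerivAt E₁ (E₂ t) t := hasDerivAt_E1fun (m+2) κ ξ
  have hLderiv : ∀ t, HasDerivAt L T t := by
    intro t
    have h := ((hasDerivAt_id t).mul_const T).const_add σ1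
    exact h.congr_deriv (one_mul T)
  have hE0 : E 0 = σk := Efun_zero (m+2) κ ξ
  have hE10 : E₁ 0 = S := E1fun_zero (m+1) κ ξ
  have hE20 : E₂ 0 = Q := E2fun_zero m κ ξ
  have hL0 : L 0 = σ1 := by simp [hLdef]
  -- the open interval
  set c : ℝ → (Fin n → ℝ) := fun t i => κ i + t * ξ i with hcdef
  have hccont : Continuous c := by
    refine continuous_pi fun i => ?_
    exact continuous_const.add (continuous_id.mul continuous_const)
  have hUopen : IsOpen (c ⁻¹' {κ' : Fin n → ℝ | ∀ j, 1 ≤ j → j ≤ m+2 → 0 < esym j κ'}) :=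
    isOpen_gamma.preimage hccont
  have hc0 : c 0 = κ := by funext i; simp [hcdef]
  have h0U : (0:ℝ) ∈ c ⁻¹' {κ' : Fin n → ℝ | ∀ j, 1 ≤ j → j ≤ m+2 → 0 < esym j κ'} := by
    simp only [Set.mem_preimage, hc0]
    exact fun j h1 h2 => hΓ j h1 h2
  obtain ⟨ε, hεpos, hball⟩ := Metric.isOpen_iff.mp hUopen 0 h0U
  have hIoo : Set.Ioo (-ε) ε ⊆ c ⁻¹' {κ' : Fin n → ℝ | ∀ j, 1 ≤ j → j ≤ m+2 → 0 < esym j κ'} := by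
    intro t ht
    apply hball
    rw [Real.ball_eq_Ioo]
    simpa using ht
  have h0Ioo : (0:ℝ) ∈ Set.Ioo (-ε) ε := ⟨neg_lt_zero.mpr hεpos, hεpos⟩
  have hLpos : ∀ t ∈ Set.Ioo (-ε) ε, 0 < L t := by
    intro t ht
    have h := hIoo ht 1 le_rfl (by omega)
    rwa [show c t = fun i => κ i + t * ξ i from rfl, esym_one_line] at h
  have hEpos : ∀ t ∈ Set.Ioo (-ε) ε, 0 < E t := by
    intro t ht
    have h := hIoo ht (m+2) (by omega) le_rfl
    rwa [show c t = fun i => κ i + t * ξ i from rfl, Efun_line] at h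
  -- concavity of φ along the line
  set φ : ℝ → ℝ := fun t => (E t / L t) ^ α with hφdef
  have hφconc : ConcaveOn ℝ (Set.Ioo (-ε) ε) φ := by
    have haff : ∀ t : ℝ, (AffineMap.lineMap κ (κ + ξ) : ℝ →ᵃ[ℝ] (Fin n → ℝ)) t = c t := by
      intro t
      funext i
      simp [AffineMap.lineMap_apply, hcdef]
      ring
    have hsub : Set.Ioo (-ε) ε ⊆
        (AffineMap.lineMap κ (κ + ξ) : ℝ →ᵃ[ℝ] (Fin n → ℝ)) ⁻¹'
          {κ' : Fin n → ℝ | ∀ j, 1 ≤ j → j ≤ m+2 → 0 < esym j κ'} := by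
      intro t ht
      rw [Set.mem_preimage, haff t]
      exact hIoo ht
    have h1 := (hconc.comp_affineMap (AffineMap.lineMap κ (κ + ξ))).subset hsub
      (convex_Ioo _ _)
    have heq : φ = (fun κ' => (esym (m+2) κ' / esym 1 κ') ^ ((1 : ℝ) / ((↑(m+2) : ℝ) - 1)))
        ∘ (AffineMap.lineMap κ (κ + ξ) : ℝ →ᵃ[ℝ] (Fin n → ℝ)) := by
      funext t
      simp only [Function.comp_apply, haff t, hφdef]
      rw [show c t = fun i => κ i + t * ξ i from rfl, Efun_line, esym_one_line]
    rw [heq]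
    exact h1
  -- first derivative of φ on the interval
  have hgd : ∀ t ∈ Set.Ioo (-ε) ε,
      HasDerivAt (fun t => E t / L t) ((E₁ t * L t - E t * T) / L t ^ 2) t :=
    fun t ht => (hE t).div (hLderiv t) (ne_of_gt (hLpos t ht))
  have hφd : ∀ t ∈ Set.Ioo (-ε) ε,
      HasDerivAt φ (α * (E t / L t) ^ (α - 1) * ((E₁ t * L t - E t * T) / L t ^ 2)) t := by
    intro t ht
    have hgpos : 0 < E t / L t := div_pos (hEpos t ht) (hLpos t ht)
    have h1 := Real.hasDerivAt_rpow_const (x := E t / L t) (p := α) (Or.inl (ne_of_gt hgpos))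
    exact h1.comp t (hgd t ht)
  -- the derivative function is antitone
  have hanti : AntitoneOn
      (fun t => α * (E t / L t) ^ (α - 1) * ((E₁ t * L t - E t * T) / L t ^ 2))
      (Set.Ioo (-ε) ε) := by
    have hφanti := hφconc.antitoneOn_deriv (fun t ht => (hφd t ht).differentiableAt)
    intro a ha b hb hab
    simp only
    rw [← (hφd b hb).deriv, ← (hφd a ha).deriv]
    exact hφanti ha hb hab
  -- second derivative at 0
  have hg10 := hgd 0 h0Ioo
  have hL0ne : L 0 ≠ 0 := ne_of_gt (hLpos 0 h0Ioo)
  have hg0pos : 0 < E 0 / L 0 := div_pos (hEpos 0 h0Ioo) (hLpos 0 h0Ioo)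
  have hrp : HasDerivAt (fun t => (E t / L t) ^ (α - 1))
      ((α - 1) * (E 0 / L 0) ^ (α - 1 - 1) * ((E₁ 0 * L 0 - E 0 * T) / L 0 ^ 2)) 0 :=
    by have h1 := (Real.hasDerivAt_rpow_const (x := E 0 / L 0) (p := α - 1)
      (Or.inl (ne_of_gt hg0pos))); exact h1.comp 0 hg10
  have hN : HasDerivAt (fun t => E₁ t * L t - E t * T)
      (E₂ 0 * L 0 + E₁ 0 * T - E₁ 0 * T) 0 :=
    ((hE₁ 0).mul (hLderiv 0)).sub ((hE 0).mul_const T)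
  have hDen : HasDerivAt (fun t => L t ^ 2) (((2:ℕ):ℝ) * L 0 ^ (2-1) * T) 0 :=
    (hLderiv 0).pow 2
  have hg1d : HasDerivAt (fun t => (E₁ t * L t - E t * T) / L t ^ 2)
      (((E₂ 0 * L 0 + E₁ 0 * T - E₁ 0 * T) * L 0 ^ 2
          - (E₁ 0 * L 0 - E 0 * T) * (((2:ℕ):ℝ) * L 0 ^ (2-1) * T)) / (L 0 ^ 2) ^ 2) 0 :=
    hN.div hDen (pow_ne_zero 2 hL0ne)
  have hdd := (hrp.const_mul α).mul hg1d
  have hc₂ := deriv_nonpos_of_antitoneOn hεpos hanti hdd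
  -- rewrite the values at 0
  rw [hE0, hE10, hE20, hL0] at hc₂
  -- divide by the positive factor
  have hrpos : 0 < α * (σk / σ1) ^ (α - 1 - 1) :=
    mul_pos hαpos (Real.rpow_pos_of_pos (div_pos hσkpos hσ1pos) _)
  have hrexp : (σk / σ1) ^ (α - 1) = (σk / σ1) ^ (α - 1 - 1) * (σk / σ1) := by
    rw [← Real.rpow_add_one (ne_of_gt (div_pos hσkpos hσ1pos)) (α - 1 - 1)]
    ring_nf
  have key : (α - 1) * ((S * σ1 - σk * T) / σ1 ^ 2) ^ 2
      + (σk / σ1) * (((Q * σ1 + S * T - S * T) * σ1 ^ 2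
          - (S * σ1 - σk * T) * (((2:ℕ):ℝ) * σ1 ^ (2-1) * T)) / (σ1 ^ 2) ^ 2) ≤ 0 := by
    have heq : α * ((α - 1) * (σk / σ1) ^ (α - 1 - 1) * ((S * σ1 - σk * T) / σ1 ^ 2))
          * ((S * σ1 - σk * T) / σ1 ^ 2)
        + α * (σk / σ1) ^ (α - 1) * (((Q * σ1 + S * T - S * T) * σ1 ^ 2
            - (S * σ1 - σk * T) * (((2:ℕ):ℝ) * σ1 ^ (2-1) * T)) / (σ1 ^ 2) ^ 2)
        = (α * (σk / σ1) ^ (α - 1 - 1))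
            * ((α - 1) * ((S * σ1 - σk * T) / σ1 ^ 2) ^ 2
              + (σk / σ1) * (((Q * σ1 + S * T - S * T) * σ1 ^ 2
                - (S * σ1 - σk * T) * (((2:ℕ):ℝ) * σ1 ^ (2-1) * T)) / (σ1 ^ 2) ^ 2)) := by
      rw [hrexp]; ring
    rw [heq] at hc₂
    nlinarith [hc₂, hrpos]
  -- final algebra
  have hαm1 : ((↑(m+2):ℝ)) - 1 ≠ 0 := by rw [hcast]; positivity
  have hid : (α - 1) * ((S * σ1 - σk * T) / σ1 ^ 2) ^ 2
      + (σk / σ1) * (((Q * σ1 + S * T - S * T) * σ1 ^ 2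
          - (S * σ1 - σk * T) * (((2:ℕ):ℝ) * σ1 ^ (2-1) * T)) / (σ1 ^ 2) ^ 2)
      = (σk / σ1 ^ 2) * (Q - (- σk * (S / σk - T / σ1)
          * (((2 - (↑(m+2):ℝ)) / ((↑(m+2):ℝ) - 1)) * S / σk
            - ((↑(m+2):ℝ) / ((↑(m+2):ℝ) - 1)) * T / σ1))) := by
    rw [hαdef, hcast]
    have hm1 : ((m:ℝ) + 1) ≠ 0 := by positivity
    field_simp
    push_cast
    ring
  rw [hid] at key
  have hqpos : 0 < σk / σ1 ^ 2 := by positivity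
  have h2 : Q - (- σk * (S / σk - T / σ1)
      * (((2 - (↑(m+2):ℝ)) / ((↑(m+2):ℝ) - 1)) * S / σk
        - ((↑(m+2):ℝ) / ((↑(m+2):ℝ) - 1)) * T / σ1)) ≤ 0 := by
    have h3 : σk / σ1 ^ 2 * (Q - (- σk * (S / σk - T / σ1)
        * (((2 - (↑(m+2):ℝ)) / ((↑(m+2):ℝ) - 1)) * S / σk
          - ((↑(m+2):ℝ) / ((↑(m+2):ℝ) - 1)) * T / σ1))) ≤ σk / σ1 ^ 2 * 0 := by
      rw [mul_zero]; exact key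
    exact le_of_mul_le_mul_left h3 hqpos
  exact sub_nonpos.mp h2
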